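/- Let n ≥ 2 be an integer and define Q(p) = (1 - n·p)·p/(1 - p) for p ∈ (0, 1/n). Then p̂ = 1 - √(n·(n-1))/n lies in the open interval (0, 1/n), and for every p ∈ (0, 1/n) one has Q(p) ≤ Q(p̂). (This is the optimal move probability for the Patroller when the attack duration is m = 2.) -/

import Mathlib

/-- Optimality of p̂ = 1 - √(n(n-1))/n for the interception probability
Q(p) = (1 - n·p)·p/(1 - p) on (0, 1/n), for m = 2. -/
theorem stmt_0 (n : ℕ) (hn : 2 ≤ n)
    (Q : ℝ → ℝ) (hQ : ∀ p : ℝ, Q p = (1 - (n : ℝ) * p) * p / (1 - p))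
    (phat : ℝ) (hphat : phat = 1 - Real.sqrt ((n : ℝ) * ((n : ℝ) - 1)) / (n : ℝ)) :
    phat ∈ Set.Ioo (0 : ℝ) (1 / (n : ℝ)) ∧
      ∀ p ∈ Set.Ioo (0 : ℝ) (1 / (n : ℝ)), Q p ≤ Q phat := by
  set N : ℝ := (n : ℝ) with hN
  have hN2 : (2 : ℝ) ≤ N := by rw [hN]; exact_mod_cast hn
  have hN0 : 0 < N := by linarith
  set s : ℝ := Real.sqrt (N * (N - 1)) with hs
  have hs_sq : s ^ 2 = N * (N - 1) := Real.sq_sqrt (by nlinarith)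
  have hs1 : N - 1 < s := by
    nlinarith [Real.sqrt_nonneg (N * (N - 1)), hs_sq]
  have hs2 : s < N := by
    nlinarith [Real.sqrt_nonneg (N * (N - 1)), hs_sq]
  have hs0 : 0 < s := by linarith
  have hphat' : phat = (N - s) / N := by rw [hphat]; field_simp
  have hmem : phat ∈ Set.Ioo (0 : ℝ) (1 / N) := by
    constructor
    · rw [hphat']; exact div_pos (by linarith) hN0
    · rw [hphat', div_lt_div_iff₀ hN0 hN0]; nlinarith
  have h1sub : 1 - phat = s / N := by rw [hphat']; field_simp; ring
  have hQphat : Q phat = 2 * N - 1 - 2 * s := by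
    rw [hQ, h1sub, hphat']
    rw [div_eq_iff (by positivity)]
    field_simp
    nlinarith [hs_sq]
  refine ⟨hmem, fun p hp => ?_⟩
  obtain ⟨hp0, hp1⟩ := hp
  have hp1' : p < 1 / N := hp1
  have hpl1 : p < 1 := by
    have : 1 / N ≤ 1 := by rw [div_le_one hN0]; linarith
    linarith
  rw [hQ, hQphat, div_le_iff₀ (by linarith)]
  nlinarith [sq_nonneg (N * p - (N - s)), hs_sq]
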